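/- Let (R, 𝔪) be a commutative Noetherian local ring, J₁ ⊆ R an ideal, J₂ ⊆ R an ideal, and I = J₁ + J₂. Suppose J₁ is generated by elements not in I². If Iⁿ ∩ J₁ ⊆ Iⁿ⁺¹ + J₁·Iⁿ⁻¹ for all n ≥ 1, then J₁ ∩ Iⁿ = J₁·Iⁿ⁻¹ for all n ≥ 1. -/

import Mathlib

/-- Implication (c) ⇒ (a): in a Noetherian local ring, if `J₁` is generated by
elements outside `I²` (where `I = J₁ + J₂`) and
`Iⁿ ∩ J₁ ⊆ Iⁿ⁺¹ + J₁·Iⁿ⁻¹` for all `n ≥ 1`, then `J₁ ⊆ I` is Aluffi torsion-free. -/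
theorem aluffi_torsion_free_of_gr_quotient {R : Type*} [CommRing R] [IsNoetherianRing R]
    [IsLocalRing R] (J₁ J₂ : Ideal R) (I : Ideal R) (hI : I = J₁ + J₂)
    (hgen : ∃ S : Set R, J₁ = Ideal.span S ∧ ∀ s ∈ S, s ∉ I ^ 2)
    (h : ∀ n : ℕ, 1 ≤ n → I ^ n ⊓ J₁ ≤ I ^ (n + 1) + J₁ * I ^ (n - 1)) :
    ∀ n : ℕ, 1 ≤ n → J₁ ⊓ I ^ n = J₁ * I ^ (n - 1) := by
  intro n hn
  by_cases hItop : I = ⊤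
  · -- then every s ∈ S lies in I^2 = ⊤, so S = ∅ and J₁ = ⊥
    obtain ⟨S, hS, hS2⟩ := hgen
    have hSempty : S = ∅ := by
      ext s; simp only [Set.mem_empty_iff_false, iff_false]
      intro hs
      exact hS2 s hs (by rw [hItop, Ideal.top_pow]; trivial)
    have hJ1 : J₁ = ⊥ := by rw [hS, hSempty]; simp
    simp [hJ1]
  -- main case: I ≤ maximal ideal, use Krull intersection
  have hpowtop : I * I ^ (n - 1) = I ^ n := by
    rw [← pow_succ']; congr 1; omega
  have hJ1I : J₁ ≤ I := hI ▸ le_sup_left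
  apply le_antisymm ?_ (le_inf Ideal.mul_le_left
    (by rw [← hpowtop]; exact Ideal.mul_mono hJ1I le_rfl))
  -- key: J₁ ⊓ I^n ≤ J₁ * I^(n-1) + I^(n+m) for all m
  have key : ∀ m : ℕ, J₁ ⊓ I ^ n ≤ J₁ * I ^ (n - 1) + I ^ (n + m) := by
    intro m
    induction m with
    | zero =>
      exact fun x hx => Submodule.mem_sup_right (by simpa using hx.2)
    | succ m ih =>
      intro x hx
      obtain ⟨z, hz, y, hy, hxy⟩ := Submodule.mem_sup.mp (ih hx)
      have hyJ : y ∈ J₁ := by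
        have : y = x - z := by rw [← hxy]; ring
        rw [this]; exact sub_mem hx.1 (Ideal.mul_le_left hz)
      obtain ⟨a, ha, b, hb, hab⟩ := Submodule.mem_sup.mp (h (n + m) (by omega) ⟨hy, hyJ⟩)
      refine Submodule.mem_sup.mpr ⟨z + b, ?_,
        a, by rwa [show n + m + 1 = n + (m + 1) by ring] at ha, by rw [← hxy, ← hab]; ring⟩
      exact add_mem hz (Ideal.mul_mono le_rfl (Ideal.pow_le_pow_right (by omega)) hb)
  intro x hx
  -- Krull intersection theorem in R ⧸ (J₁ * I^(n-1))
  set N : Ideal R := J₁ * I ^ (n - 1) with hN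
  let Q := R ⧸ N
  have hfin : Module.Finite R Q := Module.Finite.quotient R N
  have hbot := Ideal.iInf_pow_smul_eq_bot_of_isLocalRing (M := Q) (I := I) hItop
  have hxQ : Submodule.Quotient.mk (p := N) x ∈ (⨅ i : ℕ, I ^ i • ⊤ : Submodule R Q) := by
    rw [Submodule.mem_iInf]
    intro i
    obtain ⟨z, hz, y, hy, hxy⟩ := Submodule.mem_sup.mp (key i hx)
    have hyi : y ∈ I ^ i := Ideal.pow_le_pow_right (by omega) hy
    have hmk : Submodule.Quotient.mk (p := N) x = y • Submodule.Quotient.mk (p := N) 1 := by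
      rw [← Submodule.Quotient.mk_smul, smul_eq_mul, mul_one]
      exact (Submodule.Quotient.eq N).mpr (by rw [show x - y = z by rw [← hxy]; ring]; exact hz)
    rw [hmk]
    exact Submodule.smul_mem_smul hyi Submodule.mem_top
  have := hbot ▸ hxQ
  rwa [Submodule.mem_bot, Submodule.Quotient.mk_eq_zero] at this
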